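/- (Normal operator as an integral against a kernel supported on the light cone) Let κ ∈ C_c(ℝ × ℝ³ × 𝕊²) and f ∈ C_c(ℝ⁴). Then L_κ*L_κ f(t,x) = ∫_{ℝ³} [κ(t,x, ω_{xy}) κ(t+|y−x|, y, ω_{xy}) f(t+|y−x|, y) + κ(t,x, −ω_{xy}) κ(t−|y−x|, y, −ω_{xy}) f(t−|y−x|, y)] |y−x|^{−2} dy, where ω_{xy} = (y−x)/|y−x|. -/

import Mathlib

noncomputable section
open MeasureTheory

abbrev E3 := EuclideanSpace ℝ (Fin 3)
abbrev Sph := Metric.sphere (0 : E3) 1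

/-- The surface measure on the unit sphere `𝕊² ⊂ ℝ³`. -/
def sphereMeasure : Measure Sph := (volume : Measure E3).toSphere

/-- The weighted light ray transform `L_κ f(x,θ) = ∫_ℝ κ(s, x+sθ, θ) f(s, x+sθ) ds`
(the direction argument of the weight `κ` is taken in `ℝ³`). -/
def weightedLightRay (κ : (ℝ × E3) × E3 → ℝ) (f : ℝ × E3 → ℝ) (x θ : E3) : ℝ :=
  ∫ s : ℝ, κ ((s, x + s • θ), θ) * f (s, x + s • θ)

/-- The adjoint `L_κ* g(s,y) = ∫_{𝕊²} κ(s,y,θ) g(y−sθ, θ) dθ`. -/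
def weightedLightRayAdj (κ : (ℝ × E3) × E3 → ℝ) (g : E3 → E3 → ℝ) (s : ℝ) (y : E3) : ℝ :=
  ∫ θ : Sph, κ ((s, y), (θ : E3)) * g (y - s • (θ : E3)) (θ : E3) ∂sphereMeasure

instance : IsFiniteMeasure sphereMeasure := by
  unfold sphereMeasure; infer_instance

open scoped NNReal

open Set in
lemma vip_integral (H : ℝ → ℝ) :
    (∫ r : Set.Ioi (0:ℝ), H r ∂(Measure.volumeIoiPow 2))
      = ∫ r in Set.Ioi (0:ℝ), r ^ 2 * H r := by
  rw [Measure.volumeIoiPow]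
  simp only [ENNReal.ofReal]
  rw [integral_withDensity_eq_integral_smul
    ((measurable_subtype_coe.pow_const 2).real_toNNReal) (fun r : Set.Ioi (0:ℝ) => H r)]
  rw [integral_subtype_comap measurableSet_Ioi (fun a : ℝ => ((a ^ 2).toNNReal : ℝ≥0) • H a)]
  refine setIntegral_congr_fun measurableSet_Ioi fun r _ => ?_
  rw [NNReal.smul_def, Real.coe_toNNReal _ (sq_nonneg r), smul_eq_mul]

open Set in
lemma vip_integrable_iff (H : ℝ → ℝ) :
    Integrable (fun r : Set.Ioi (0:ℝ) => H r) (Measure.volumeIoiPow 2)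
      ↔ IntegrableOn (fun r => r ^ 2 * H r) (Set.Ioi (0:ℝ)) := by
  rw [Measure.volumeIoiPow]
  simp only [ENNReal.ofReal]
  rw [integrable_withDensity_iff_integrable_smul
    ((measurable_subtype_coe.pow_const 2).real_toNNReal)]
  have h1 : (fun r : Set.Ioi (0:ℝ) => ((((r:ℝ) ^ 2).toNNReal : ℝ≥0)) • H r)
      = (fun a : ℝ => a ^ 2 * H a) ∘ (fun r : Set.Ioi (0:ℝ) => (r : ℝ)) := by
    funext r
    simp only [Function.comp_apply, NNReal.smul_def,
      Real.coe_toNNReal _ (sq_nonneg (r:ℝ)), smul_eq_mul]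
  rw [h1, ← (MeasurableEmbedding.subtype_coe measurableSet_Ioi).integrable_map_iff,
    map_comap_subtype_coe measurableSet_Ioi]
  rfl

lemma polar_integral (g : E3 → ℝ) :
    ∫ v, g v = ∫ p : Sph × Set.Ioi (0:ℝ), g ((p.2 : ℝ) • (p.1 : E3))
      ∂(sphereMeasure.prod (Measure.volumeIoiPow 2)) := by
  have h3 : Module.finrank ℝ E3 - 1 = 2 := by
    rw [finrank_euclideanSpace]; simp
  have hmp := (volume : Measure E3).measurePreserving_homeomorphUnitSphereProd
  rw [h3] at hmp
  have h1 : ∫ v, g v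
      = ∫ v : ({0}ᶜ : Set E3), g v ∂((volume : Measure E3).comap Subtype.val) := by
    rw [integral_subtype_comap (measurableSet_singleton (0:E3)).compl (fun v => g v),
      restrict_compl_singleton]
  have hsm : sphereMeasure = (volume : Measure E3).toSphere := rfl
  rw [hsm, h1,
    ← hmp.integral_comp (Homeomorph.measurableEmbedding _)
      (fun p : Sph × Set.Ioi (0:ℝ) => g ((p.2 : ℝ) • (p.1 : E3)))]
  refine integral_congr_ae (Filter.Eventually.of_forall fun v => ?_)
  simp only [homeomorphUnitSphereProd_apply_snd_coe, homeomorphUnitSphereProd_apply_fst_coe]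
  rw [smul_inv_smul₀ (norm_ne_zero_iff.2 (Set.mem_compl_singleton_iff.1 v.2))]

lemma polar_integrable_iff (g : E3 → ℝ) :
    Integrable g (volume : Measure E3)
      ↔ Integrable (fun p : Sph × Set.Ioi (0:ℝ) => g ((p.2 : ℝ) • (p.1 : E3)))
          (sphereMeasure.prod (Measure.volumeIoiPow 2)) := by
  have h3 : Module.finrank ℝ E3 - 1 = 2 := by
    rw [finrank_euclideanSpace]; simp
  have hmp := (volume : Measure E3).measurePreserving_homeomorphUnitSphereProd
  rw [h3] at hmp
  have hsm : sphereMeasure = (volume : Measure E3).toSphere := rfl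
  rw [hsm, ← hmp.integrable_comp_emb (Homeomorph.measurableEmbedding _)]
  have h2 : ((fun p : Sph × Set.Ioi (0:ℝ) => g ((p.2 : ℝ) • (p.1 : E3)))
      ∘ (homeomorphUnitSphereProd E3)) = fun v : ({0}ᶜ : Set E3) => g v := by
    funext v
    simp only [Function.comp_apply, homeomorphUnitSphereProd_apply_snd_coe,
      homeomorphUnitSphereProd_apply_fst_coe]
    rw [smul_inv_smul₀ (norm_ne_zero_iff.2 (Set.mem_compl_singleton_iff.1 v.2))]
  rw [h2]
  have hc := (measurableSet_singleton (0:E3)).compl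
  have e : Integrable (g ∘ (Subtype.val : ({0}ᶜ : Set E3) → E3))
      ((volume : Measure E3).comap Subtype.val) ↔ Integrable g (volume : Measure E3) := by
    rw [← (MeasurableEmbedding.subtype_coe hc).integrable_map_iff,
      map_comap_subtype_coe hc, restrict_compl_singleton]
  exact (e.trans Iff.rfl).symm


/-- Normal operator as an integral against a kernel supported on the light
cone: for `κ ∈ C_c(ℝ × ℝ³ × 𝕊²)` and `f ∈ C_c(ℝ⁴)`, with `ω = (y−x)/|y−x|`,
`L_κ*L_κ f(t,x) = ∫_{ℝ³} [κ(t,x,ω) κ(t+|y−x|, y, ω) f(t+|y−x|, y)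
  + κ(t,x,−ω) κ(t−|y−x|, y, −ω) f(t−|y−x|, y)] |y−x|^{−2} dy`. -/
theorem weighted_lightRay_normal_kernel
    (κ : (ℝ × E3) × E3 → ℝ) (hκc : Continuous κ)
    (hκsupp : ∃ K : Set (ℝ × E3), IsCompact K ∧ ∀ p θ, p ∉ K → κ (p, θ) = 0)
    (f : ℝ × E3 → ℝ) (hfc : Continuous f) (hfsupp : HasCompactSupport f)
    (t : ℝ) (x : E3) :
    weightedLightRayAdj κ (fun x' θ => weightedLightRay κ f x' θ) t x
      = ∫ y : E3,
          (κ ((t, x), ‖y - x‖⁻¹ • (y - x))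
              * κ ((t + ‖y - x‖, y), ‖y - x‖⁻¹ • (y - x)) * f (t + ‖y - x‖, y)
            + κ ((t, x), -(‖y - x‖⁻¹ • (y - x)))
              * κ ((t - ‖y - x‖, y), -(‖y - x‖⁻¹ • (y - x))) * f (t - ‖y - x‖, y))
            * (‖y - x‖ ^ 2)⁻¹ := by
  classical
  obtain ⟨K, hKc, hK0⟩ := hκsupp
  -- bound for κ on pairs whose direction is a unit vector
  obtain ⟨Mκ0, hMκ0⟩ := (hKc.prod (isCompact_sphere (0:E3) 1)).exists_bound_of_continuousOn
    (hκc.continuousOn (s := K ×ˢ Metric.sphere (0:E3) 1))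
  set Mk : ℝ := max Mκ0 0 with hMkdef
  have hMk0 : 0 ≤ Mk := le_max_right _ _
  have κbound : ∀ (p : ℝ × E3) (θ : E3), ‖θ‖ = 1 → ‖κ (p, θ)‖ ≤ Mk := by
    intro p θ hθ
    by_cases hp : p ∈ K
    · exact le_max_of_le_left (hMκ0 (p, θ) ⟨hp, by
        simpa [Metric.mem_sphere, dist_zero_right] using hθ⟩)
    · simp [hK0 p θ hp, hMk0]
  -- bound for f
  obtain ⟨Mf, hMf⟩ := hfsupp.exists_bound_of_continuous hfc
  have hMf0 : 0 ≤ Mf := le_trans (norm_nonneg _) (hMf (0, 0))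
  -- radius of support of f
  obtain ⟨Rf, hRf⟩ := hfsupp.isBounded.subset_closedBall (0 : ℝ × E3)
  have hf0 : ∀ p : ℝ × E3, Rf < ‖p.1‖ → f p = 0 := by
    intro p hp
    by_contra hfp
    have h1 : p ∈ tsupport f := subset_tsupport f hfp
    have h2 := hRf h1
    rw [Metric.mem_closedBall, dist_zero_right] at h2
    exact absurd (le_trans (norm_fst_le p) h2) (not_le.mpr hp)
  set R : ℝ := |Rf| + |t| + 1 with hRdef
  have hR : 0 < R := by positivity
  -- the kernel along rays
  set h : Sph → ℝ → ℝ := fun θ u =>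
    κ ((t, x), (θ : E3)) * κ ((t + u, x + u • (θ : E3)), (θ : E3))
      * f (t + u, x + u • (θ : E3)) with hhdef
  have hh0 : ∀ (θ : Sph) (u : ℝ), R ≤ |u| → h θ u = 0 := by
    intro θ u hu
    have h1 : |u| - |t| ≤ |t + u| := by
      rw [add_comm]
      have := abs_sub_abs_le_abs_sub u (-t)
      simpa [sub_neg_eq_add] using this
    have h2 : Rf < |t + u| := by
      have : Rf ≤ |Rf| := le_abs_self _
      have hle : |Rf| + 1 ≤ |u| - |t| := by
        rw [hRdef] at hu; linarith
      linarith
    have := hf0 (t + u, x + u • (θ : E3)) (by simpa [Real.norm_eq_abs] using h2)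
    simp [hhdef, this]
  have hhc : Continuous fun q : Sph × ℝ => h q.1 q.2 := by
    apply Continuous.mul
    apply Continuous.mul
    · exact hκc.comp (by fun_prop)
    · exact hκc.comp (by fun_prop)
    · exact hfc.comp (by fun_prop)
  have hhbd : ∀ (θ : Sph) (u : ℝ), ‖h θ u‖ ≤ Mk * Mk * Mf := by
    intro θ u
    have hθ1 : ‖(θ : E3)‖ = 1 := by
      have := θ.2
      simpa [Metric.mem_sphere, dist_zero_right] using this
    have b1 := κbound (t, x) _ hθ1
    have b2 := κbound (t + u, x + u • (θ : E3)) _ hθ1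
    have b3 := hMf (t + u, x + u • (θ : E3))
    calc ‖h θ u‖ = ‖κ ((t, x), (θ:E3))‖ * ‖κ ((t + u, x + u • (θ:E3)), (θ:E3))‖
          * ‖f (t + u, x + u • (θ:E3))‖ := by rw [hhdef]; simp [norm_mul]
      _ ≤ Mk * Mk * Mf := by
          exact mul_le_mul (mul_le_mul b1 b2 (norm_nonneg _) hMk0) b3 (norm_nonneg _)
            (by positivity)
  have hWc : ∀ (θ : Sph) (σ : ℝ), Continuous fun u : ℝ => h θ (σ * u) :=
    fun θ σ => hhc.comp ((continuous_const.prodMk (continuous_const.mul continuous_id)))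
  have hWsupp : ∀ (θ : Sph) (σ : ℝ), σ = 1 ∨ σ = -1 →
      HasCompactSupport fun u : ℝ => h θ (σ * u) := by
    intro θ σ hσ
    refine HasCompactSupport.intro (isCompact_Icc (a := -R) (b := R)) fun u hu => ?_
    have habs : |σ * u| = |u| := by rcases hσ with rfl | rfl <;> simp [abs_mul]
    have hu' : R ≤ |u| := by
      simp only [Set.mem_Icc, not_and_or, not_le] at hu
      rcases hu with h1 | h1
      · calc R ≤ -u := by linarith
          _ ≤ |u| := neg_le_abs u
      · exact le_trans (le_of_lt h1) (le_abs_self u)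
    exact hh0 θ _ (habs ▸ hu')
  have hWint : ∀ (θ : Sph) (σ : ℝ), σ = 1 ∨ σ = -1 →
      Integrable (fun u : ℝ => h θ (σ * u)) := by
    intro θ σ hσ
    exact (hWc θ σ).integrable_of_hasCompactSupport (hWsupp θ σ hσ)
  -- key integrability on the product space
  have key : ∀ σ : ℝ, σ = 1 ∨ σ = -1 →
      Integrable (fun p : Sph × Set.Ioi (0:ℝ) => h p.1 (σ * (p.2 : ℝ)) * (((p.2 : ℝ)) ^ 2)⁻¹)
        (sphereMeasure.prod (Measure.volumeIoiPow 2)) := by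
    intro σ hσ
    have hmeas : AEStronglyMeasurable
        (fun p : Sph × Set.Ioi (0:ℝ) => h p.1 (σ * (p.2 : ℝ)) * (((p.2 : ℝ)) ^ 2)⁻¹)
        (sphereMeasure.prod (Measure.volumeIoiPow 2)) := by
      apply Measurable.aestronglyMeasurable
      apply Measurable.mul
      · exact (hhc.comp ((continuous_fst.prodMk
          (continuous_const.mul (continuous_subtype_val.comp continuous_snd))))).measurable
      · exact (((continuous_subtype_val.comp continuous_snd).pow 2).measurable).inv
    refine (integrable_prod_iff hmeas).mpr ⟨?_, ?_⟩
    · refine Filter.Eventually.of_forall fun θ => ?_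
      refine (vip_integrable_iff (fun u : ℝ => h θ (σ * u) * (u ^ 2)⁻¹)).mpr ?_
      refine ((hWint θ σ hσ).integrableOn).congr_fun ?_ measurableSet_Ioi
      intro r hr
      have hr0 : (r : ℝ) ≠ 0 := ne_of_gt hr
      field_simp
    · refine Integrable.mono' (integrable_const (Mk * Mk * Mf * R)) hmeas.norm.integral_prod_right'
        (Filter.Eventually.of_forall fun θ => ?_)
      have h1 : (∫ r : Set.Ioi (0:ℝ), ‖h θ (σ * (r : ℝ)) * (((r : ℝ)) ^ 2)⁻¹‖
            ∂(Measure.volumeIoiPow 2))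
          = ∫ r in Set.Ioi (0:ℝ), ‖h θ (σ * r)‖ := by
        rw [vip_integral (fun u : ℝ => ‖h θ (σ * u) * (u ^ 2)⁻¹‖)]
        refine setIntegral_congr_fun measurableSet_Ioi fun r hr => ?_
        have hr0 : (r : ℝ) ≠ 0 := ne_of_gt hr
        have hn : ‖((r : ℝ) ^ 2)⁻¹‖ = ((r : ℝ) ^ 2)⁻¹ := by
          rw [Real.norm_eq_abs, abs_of_pos (by positivity)]
        rw [norm_mul, hn]
        field_simp
      rw [h1]
      have h2 : (∫ r in Set.Ioi (0:ℝ), ‖h θ (σ * r)‖)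
          = ∫ r in Set.Ioc (0:ℝ) R, ‖h θ (σ * r)‖ := by
        refine setIntegral_eq_of_subset_of_forall_diff_eq_zero measurableSet_Ioi
          Set.Ioc_subset_Ioi_self fun r hr => ?_
        obtain ⟨hr1, hr2⟩ := hr
        have hrR : R < r := by
          by_contra hcon
          exact hr2 ⟨hr1, not_lt.mp hcon⟩
        have habs : |σ * r| = |r| := by rcases hσ with rfl | rfl <;> simp [abs_mul]
        have : R ≤ |σ * r| := by
          rw [habs, abs_of_pos hr1]; exact le_of_lt hrR
        simp [hh0 θ _ this]
      rw [h2]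
      have h3 : ‖∫ r in Set.Ioc (0:ℝ) R, ‖h θ (σ * r)‖‖ ≤ (Mk * Mk * Mf) * R := by
        have := norm_setIntegral_le_of_norm_le_const (μ := volume) (s := Set.Ioc (0:ℝ) R)
          (C := Mk * Mk * Mf) (f := fun r => ‖h θ (σ * r)‖)
          (by rw [Real.volume_Ioc]; exact ENNReal.ofReal_lt_top)
          (fun r _ => by rw [norm_norm]; exact hhbd θ _)
        calc ‖∫ r in Set.Ioc (0:ℝ) R, ‖h θ (σ * r)‖‖
            ≤ (Mk * Mk * Mf) * (volume (Set.Ioc (0:ℝ) R)).toReal := this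
          _ = (Mk * Mk * Mf) * R := by
              rw [Real.volume_Ioc, ENNReal.toReal_ofReal (by linarith)]
              ring_nf
      calc ‖∫ r in Set.Ioc (0:ℝ) R, ‖h θ (σ * r)‖‖ ≤ (Mk * Mk * Mf) * R := h3
        _ = Mk * Mk * Mf * R := by ring
  -- Fubini for each σ
  have fub : ∀ σ : ℝ, σ = 1 ∨ σ = -1 →
      (∫ p : Sph × Set.Ioi (0:ℝ), h p.1 (σ * (p.2 : ℝ)) * (((p.2 : ℝ)) ^ 2)⁻¹
          ∂(sphereMeasure.prod (Measure.volumeIoiPow 2)))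
        = ∫ θ : Sph, (∫ r in Set.Ioi (0:ℝ), h θ (σ * r)) ∂sphereMeasure := by
    intro σ hσ
    rw [integral_prod _ (key σ hσ)]
    refine integral_congr_ae (Filter.Eventually.of_forall fun θ => ?_)
    show (∫ r : Set.Ioi (0:ℝ), h θ (σ * (r : ℝ)) * (((r : ℝ)) ^ 2)⁻¹ ∂(Measure.volumeIoiPow 2))
      = ∫ r in Set.Ioi (0:ℝ), h θ (σ * r)
    rw [vip_integral (fun u : ℝ => h θ (σ * u) * (u ^ 2)⁻¹)]
    refine setIntegral_congr_fun measurableSet_Ioi fun r hr => ?_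
    have hr0 : r ≠ 0 := ne_of_gt hr
    field_simp
  have hIint : ∀ σ : ℝ, σ = 1 ∨ σ = -1 →
      Integrable (fun θ : Sph => ∫ r in Set.Ioi (0:ℝ), h θ (σ * r)) sphereMeasure := by
    intro σ hσ
    refine ((key σ hσ).integral_prod_left).congr (Filter.Eventually.of_forall fun θ => ?_)
    show (∫ r : Set.Ioi (0:ℝ), h θ (σ * (r : ℝ)) * (((r : ℝ)) ^ 2)⁻¹ ∂(Measure.volumeIoiPow 2))
      = ∫ r in Set.Ioi (0:ℝ), h θ (σ * r)
    rw [vip_integral (fun u : ℝ => h θ (σ * u) * (u ^ 2)⁻¹)]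
    refine setIntegral_congr_fun measurableSet_Ioi fun r hr => ?_
    have hr0 : r ≠ 0 := ne_of_gt hr
    field_simp
  -- the two halves of the kernel, as functions on `E3`
  set a : E3 → ℝ := fun v =>
    κ ((t, x), ‖v‖⁻¹ • v) * κ ((t + ‖v‖, x + v), ‖v‖⁻¹ • v) * f (t + ‖v‖, x + v)
      * (‖v‖ ^ 2)⁻¹ with hadef
  set b : E3 → ℝ := fun v =>
    κ ((t, x), ‖v‖⁻¹ • v) * κ ((t - ‖v‖, x - v), ‖v‖⁻¹ • v) * f (t - ‖v‖, x - v)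
      * (‖v‖ ^ 2)⁻¹ with hbdef
  have hθnorm : ∀ p : Sph × Set.Ioi (0:ℝ), ‖(p.2 : ℝ) • (p.1 : E3)‖ = (p.2 : ℝ) := by
    intro p
    have hθ1 : ‖(p.1 : E3)‖ = 1 := by
      have := p.1.2; simpa [Metric.mem_sphere, dist_zero_right] using this
    rw [norm_smul, hθ1, Real.norm_eq_abs, abs_of_pos p.2.2, mul_one]
  have hωa : ∀ p : Sph × Set.Ioi (0:ℝ),
      ((p.2 : ℝ))⁻¹ • ((p.2 : ℝ) • (p.1 : E3)) = (p.1 : E3) := by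
    intro p
    rw [smul_smul, inv_mul_cancel₀ (ne_of_gt p.2.2), one_smul]
  have hpa : (fun p : Sph × Set.Ioi (0:ℝ) => a ((p.2 : ℝ) • (p.1 : E3)))
      = fun p : Sph × Set.Ioi (0:ℝ) => h p.1 (1 * (p.2 : ℝ)) * (((p.2 : ℝ)) ^ 2)⁻¹ := by
    funext p
    simp only [hadef, hhdef, hθnorm p, hωa p, one_mul]
  have hpb : (fun p : Sph × Set.Ioi (0:ℝ) => b ((p.2 : ℝ) • (p.1 : E3)))
      = fun p : Sph × Set.Ioi (0:ℝ) => h p.1 ((-1) * (p.2 : ℝ)) * (((p.2 : ℝ)) ^ 2)⁻¹ := by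
    funext p
    simp only [hbdef, hhdef, hθnorm p, hωa p, neg_one_mul, sub_eq_add_neg, neg_smul]
  have hinta : Integrable a (volume : Measure E3) :=
    (polar_integrable_iff a).mpr (by rw [hpa]; exact key 1 (Or.inl rfl))
  have hintb : Integrable b (volume : Measure E3) :=
    (polar_integrable_iff b).mpr (by rw [hpb]; exact key (-1) (Or.inr rfl))
  have hIa : ∫ v, a v = ∫ θ : Sph, (∫ r in Set.Ioi (0:ℝ), h θ (1 * r)) ∂sphereMeasure := by
    rw [polar_integral a, hpa]; exact fub 1 (Or.inl rfl)
  have hIb : ∫ v, b v = ∫ θ : Sph, (∫ r in Set.Ioi (0:ℝ), h θ ((-1) * r)) ∂sphereMeasure := by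
    rw [polar_integral b, hpb]; exact fub (-1) (Or.inr rfl)
  -- negation substitution for the second half
  have hbnegint : Integrable (fun v => b (-v)) (volume : Measure E3) := by
    have := (integrable_comp_smul_iff (volume : Measure E3) b
      (R := (-1:ℝ)) (by norm_num)).mpr hintb
    simpa using this
  have hbneg : (∫ v, b (-v)) = ∫ v, b v := by
    have hcs := Measure.integral_comp_smul (volume : Measure E3) b (-1)
    have h3 : Module.finrank ℝ E3 = 3 := by rw [finrank_euclideanSpace]; simp
    rw [h3, show |(((-1:ℝ)) ^ 3)⁻¹| = 1 by norm_num] at hcs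
    simpa [neg_one_smul] using hcs
  -- identify the right-hand side
  have hRHS : (∫ y : E3,
          (κ ((t, x), ‖y - x‖⁻¹ • (y - x))
              * κ ((t + ‖y - x‖, y), ‖y - x‖⁻¹ • (y - x)) * f (t + ‖y - x‖, y)
            + κ ((t, x), -(‖y - x‖⁻¹ • (y - x)))
              * κ ((t - ‖y - x‖, y), -(‖y - x‖⁻¹ • (y - x))) * f (t - ‖y - x‖, y))
            * (‖y - x‖ ^ 2)⁻¹)
      = (∫ v, a v) + ∫ v, b v := by
    rw [← integral_add_left_eq_self (fun y : E3 =>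
          (κ ((t, x), ‖y - x‖⁻¹ • (y - x))
              * κ ((t + ‖y - x‖, y), ‖y - x‖⁻¹ • (y - x)) * f (t + ‖y - x‖, y)
            + κ ((t, x), -(‖y - x‖⁻¹ • (y - x)))
              * κ ((t - ‖y - x‖, y), -(‖y - x‖⁻¹ • (y - x))) * f (t - ‖y - x‖, y))
            * (‖y - x‖ ^ 2)⁻¹) x]
    have hpt : ∀ v : E3,
        (κ ((t, x), ‖x + v - x‖⁻¹ • (x + v - x))
            * κ ((t + ‖x + v - x‖, x + v), ‖x + v - x‖⁻¹ • (x + v - x)) * f (t + ‖x + v - x‖, x + v)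
          + κ ((t, x), -(‖x + v - x‖⁻¹ • (x + v - x)))
            * κ ((t - ‖x + v - x‖, x + v), -(‖x + v - x‖⁻¹ • (x + v - x))) * f (t - ‖x + v - x‖, x + v))
          * (‖x + v - x‖ ^ 2)⁻¹ = a v + b (-v) := by
      intro v
      simp only [add_sub_cancel_left, hadef, hbdef, norm_neg, smul_neg, sub_neg_eq_add]
      ring
    rw [integral_congr_ae (Filter.Eventually.of_forall hpt), integral_add hinta hbnegint, hbneg]
  -- identify the left-hand side, pointwise on the sphere
  have hLHSθ : ∀ θ : Sph,
      κ ((t, x), (θ : E3)) * weightedLightRay κ f (x - t • (θ : E3)) (θ : E3)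
        = (∫ r in Set.Ioi (0:ℝ), h θ (1 * r)) + ∫ r in Set.Ioi (0:ℝ), h θ ((-1) * r) := by
    intro θ
    have e1 : ∀ s : ℝ, (x - t • (θ : E3)) + s • (θ : E3) = x + (s - t) • (θ : E3) := by
      intro s; rw [sub_smul]; abel
    rw [weightedLightRay]
    simp only [e1]
    have e2 : (∫ s : ℝ, κ ((s, x + (s - t) • (θ : E3)), (θ : E3)) * f (s, x + (s - t) • (θ : E3)))
        = ∫ u : ℝ, κ ((t + u, x + u • (θ : E3)), (θ : E3)) * f (t + u, x + u • (θ : E3)) := by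
      rw [← integral_add_right_eq_self
        (fun s : ℝ => κ ((s, x + (s - t) • (θ : E3)), (θ : E3)) * f (s, x + (s - t) • (θ : E3))) t]
      congr 1
      funext u
      rw [add_sub_cancel_right, add_comm u t]
    rw [e2, ← integral_const_mul]
    have e3 : (fun u : ℝ => κ ((t, x), (θ : E3))
          * (κ ((t + u, x + u • (θ : E3)), (θ : E3)) * f (t + u, x + u • (θ : E3))))
        = fun u : ℝ => h θ u := by
      funext u; rw [hhdef]; ring
    rw [e3]
    have hint1 : Integrable (h θ) := by
      have := hWint θ 1 (Or.inl rfl); simpa using this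
    rw [← intervalIntegral.integral_Iic_add_Ioi (b := (0:ℝ)) hint1.integrableOn hint1.integrableOn, add_comm]
    congr 1
    · simp only [one_mul]
    · have hnz := integral_comp_neg_Iic (0:ℝ) (fun u : ℝ => h θ (-u))
      simp only [neg_neg, neg_zero] at hnz
      simp only [neg_one_mul]
      exact hnz
  calc weightedLightRayAdj κ (fun x' θ => weightedLightRay κ f x' θ) t x
      = ∫ θ : Sph, ((∫ r in Set.Ioi (0:ℝ), h θ (1 * r))
          + ∫ r in Set.Ioi (0:ℝ), h θ ((-1) * r)) ∂sphereMeasure := by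
        rw [weightedLightRayAdj]
        exact integral_congr_ae (Filter.Eventually.of_forall fun θ => hLHSθ θ)
    _ = (∫ θ : Sph, (∫ r in Set.Ioi (0:ℝ), h θ (1 * r)) ∂sphereMeasure)
        + ∫ θ : Sph, (∫ r in Set.Ioi (0:ℝ), h θ ((-1) * r)) ∂sphereMeasure :=
        integral_add (hIint 1 (Or.inl rfl)) (hIint (-1) (Or.inr rfl))
    _ = (∫ v, a v) + ∫ v, b v := by rw [hIa, hIb]
    _ = _ := hRHS.symm
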